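/- arXiv:1211.4978 — 3 statements merged into one kernel-verified Lean document; each statement's English description precedes it below -/
import Mathlib

section
/- For each fixed S > 0 and K > 0, the function σ ↦ C_BS(S, K, σ) is strictly increasing on (0, ∞). -/
open Real Set Filter

/-- Standard normal cdf. -/
noncomputable def stdNormalCDF (x : ℝ) : ℝ :=
  ∫ t in Set.Iio x, Real.exp (-t ^ 2 / 2) / Real.sqrt (2 * Real.pi)

/-- Black–Scholes call price with maturity `T`. -/
noncomputable def C_BS (T S K σ : ℝ) : ℝ :=
  S * stdNormalCDF (Real.log (S / K) / (σ * Real.sqrt T) + σ * Real.sqrt T / 2) -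
  K * stdNormalCDF (Real.log (S / K) / (σ * Real.sqrt T) - σ * Real.sqrt T / 2)

open MeasureTheory

noncomputable def stdPDF (x : ℝ) : ℝ := Real.exp (-x ^ 2 / 2) / Real.sqrt (2 * Real.pi)

lemma stdPDF_pos (x : ℝ) : 0 < stdPDF x :=
  div_pos (Real.exp_pos _) (Real.sqrt_pos.2 (by positivity))

lemma integrable_stdPDF : Integrable stdPDF := by
  have h : Integrable (fun x : ℝ => Real.exp (-(1/2 : ℝ) * x ^ 2)) :=
    integrable_exp_neg_mul_sq (by norm_num)
  have := h.div_const (Real.sqrt (2 * Real.pi))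
  convert this using 2 with x
  unfold stdPDF
  rw [div_eq_div_iff (by positivity) (by positivity)]
  ring_nf

lemma continuous_stdPDF : Continuous stdPDF := by
  unfold stdPDF; fun_prop

lemma hasDerivAt_stdNormalCDF (x : ℝ) : HasDerivAt stdNormalCDF (stdPDF x) x := by
  have heq : ∀ y : ℝ, stdNormalCDF y = stdNormalCDF 0 + ∫ t in (0:ℝ)..y, stdPDF t := by
    intro y
    have h1 : ∀ z : ℝ, stdNormalCDF z = ∫ t in Set.Iic z, stdPDF t := by
      intro z
      unfold stdNormalCDF stdPDF
      exact setIntegral_congr_set Iio_ae_eq_Iic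
    rw [h1, h1, ← intervalIntegral.integral_Iic_sub_Iic
      integrable_stdPDF.integrableOn integrable_stdPDF.integrableOn]
    ring
  have : HasDerivAt (fun u => ∫ t in (0:ℝ)..u, stdPDF t) (stdPDF x) x :=
    intervalIntegral.integral_hasDerivAt_right
      (integrable_stdPDF.intervalIntegrable)
      (continuous_stdPDF.stronglyMeasurableAtFilter _ _)
      continuous_stdPDF.continuousAt
  have h2 := this.const_add (stdNormalCDF 0)
  simpa [← heq] using h2

/-- The Black–Scholes price is strictly increasing in volatility. -/
theorem C_BS_strictMonoOn (T : ℝ) (hT : 0 < T) (S K : ℝ) (hS : 0 < S) (hK : 0 < K) :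
    StrictMonoOn (fun σ => C_BS T S K σ) (Set.Ioi 0) := by
  set s := Real.sqrt T with hs_def
  have hs : 0 < s := Real.sqrt_pos.2 hT
  set L := Real.log (S / K) with hL_def
  -- derivative lemma
  have key : ∀ σ : ℝ, 0 < σ → HasDerivAt (fun σ => C_BS T S K σ)
      (S * stdPDF (L / (σ * s) + σ * s / 2) * s) σ := by
    intro σ hσ
    have hσs : σ * s ≠ 0 := by positivity
    have hd1 : HasDerivAt (fun σ : ℝ => L / (σ * s) + σ * s / 2)
        (L * (-s / (σ * s) ^ 2) + s / 2) σ := by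
      have h1 : HasDerivAt (fun σ : ℝ => σ * s) s σ := by simpa using (hasDerivAt_id σ).mul_const s
      have h2 : HasDerivAt (fun σ : ℝ => (σ * s)⁻¹) (-s / (σ * s) ^ 2) σ := by
        exact h1.inv hσs
      have h3 := (h2.const_mul L).add (h1.div_const 2)
      simpa [div_eq_mul_inv, mul_comm, mul_assoc, mul_left_comm, Pi.add_def] using h3
    have hd2 : HasDerivAt (fun σ : ℝ => L / (σ * s) - σ * s / 2)
        (L * (-s / (σ * s) ^ 2) - s / 2) σ := by
      have h1 : HasDerivAt (fun σ : ℝ => σ * s) s σ := by simpa using (hasDerivAt_id σ).mul_const s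
      have h2 : HasDerivAt (fun σ : ℝ => (σ * s)⁻¹) (-s / (σ * s) ^ 2) σ := by
        exact h1.inv hσs
      have h3 := (h2.const_mul L).sub (h1.div_const 2)
      simpa [div_eq_mul_inv, mul_comm, mul_assoc, mul_left_comm, Pi.sub_def] using h3
    set d1 := L / (σ * s) + σ * s / 2 with hd1def
    set d2 := L / (σ * s) - σ * s / 2 with hd2def
    have hC1 := ((hasDerivAt_stdNormalCDF d1).comp σ hd1).const_mul S
    have hC2 := ((hasDerivAt_stdNormalCDF d2).comp σ hd2).const_mul K
    have hC := hC1.sub hC2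
    have hident : K * stdPDF d2 = S * stdPDF d1 := by
      unfold stdPDF
      have hdsq : d2 ^ 2 = d1 ^ 2 - 2 * L := by
        have : d1 ^ 2 - d2 ^ 2 = (d1 + d2) * (d1 - d2) := by ring
        have h1 : d1 + d2 = 2 * (L / (σ * s)) := by rw [hd1def, hd2def]; ring
        have h2 : d1 - d2 = σ * s := by rw [hd1def, hd2def]; ring
        have h3 : d1 ^ 2 - d2 ^ 2 = 2 * L := by
          rw [this, h1, h2]; field_simp
        linarith
      have hexp : Real.exp (-d2 ^ 2 / 2) = Real.exp (-d1 ^ 2 / 2) * (S / K) := by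
        rw [hdsq]
        rw [show -(d1 ^ 2 - 2 * L) / 2 = -d1 ^ 2 / 2 + L by ring, Real.exp_add]
        rw [hL_def, Real.exp_log (by positivity)]
      rw [hexp]
      field_simp
    have hfinal : C_BS T S K = fun σ => S * stdNormalCDF (L / (σ * s) + σ * s / 2)
        - K * stdNormalCDF (L / (σ * s) - σ * s / 2) := rfl
    rw [hfinal]
    refine hC.congr_deriv ?_
    have : S * stdPDF d1 * (L * (-s / (σ * s) ^ 2) + s / 2)
        - K * stdPDF d2 * (L * (-s / (σ * s) ^ 2) - s / 2)
        = S * stdPDF d1 * s := by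
      rw [hident]; ring
    linarith [this]
  apply strictMonoOn_of_deriv_pos (convex_Ioi 0)
  · intro x hx
    exact ((key x hx).continuousAt).continuousWithinAt
  · intro x hx
    rw [interior_Ioi] at hx
    rw [(key x hx).deriv]
    have := stdPDF_pos (L / (x * s) + x * s / 2)
    positivity
end

section
/- The implied volatility function is real analytic: if I : ℝ³ → ℝ satisfies I(S,K,c) > 0 and C_BS(S, K, I(S,K,c)) = c for all (S,K,c) ∈ D_I, then I is real analytic on the open set D_I. -/
open Real Set Filter

/-- The domain of the implied volatility function. -/
def D_I : Set (Fin 3 → ℝ) :=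
  {x | 0 < x 0 ∧ 0 < x 1 ∧ max (x 0 - x 1) 0 < x 2 ∧ x 2 < x 0}

open MeasureTheory intervalIntegral Topology

lemma analyticAt_rlog {x : ℝ} (hx : 0 < x) : AnalyticAt ℝ Real.log x := by
  have h2 : AnalyticAt ℝ (Complex.log ∘ (fun y : ℝ => Complex.ofRealCLM y)) x :=
    AnalyticAt.comp
      ((analyticAt_clog (by simp [Complex.mem_slitPlane_iff, hx])).restrictScalars)
      (Complex.ofRealCLM.analyticAt x)
  have h1 : AnalyticAt ℝ ((fun z : ℂ => Complex.reCLM z) ∘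
      (Complex.log ∘ (fun y : ℝ => Complex.ofRealCLM y))) x :=
    (Complex.reCLM.analyticAt _).comp h2
  apply h1.congr
  filter_upwards [eventually_gt_nhds hx] with y hy
  simp only [Function.comp_apply, Complex.ofRealCLM_apply, Complex.reCLM_apply]
  rw [← Complex.ofReal_log hy.le, Complex.ofReal_re]

noncomputable def cP (z : ℂ) : ℂ := z * ∫ t in (0:ℝ)..1, Complex.exp (-((t:ℂ)*z)^2/2)

lemma diff_cP : Differentiable ℂ cP := by
  have hH : Differentiable ℂ (fun z : ℂ => ∫ t in (0:ℝ)..1, Complex.exp (-((t:ℂ)*z)^2/2)) := by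
    intro z₀
    set M : ℝ := ‖z₀‖ + 1 with hM
    have hM0 : 0 < M := by positivity
    have hcont : ∀ z : ℂ, Continuous (fun t : ℝ => Complex.exp (-((t:ℂ)*z)^2/2)) := by
      intro z; fun_prop
    have key := intervalIntegral.hasDerivAt_integral_of_dominated_loc_of_deriv_le
      (F := fun (z : ℂ) (t : ℝ) => Complex.exp (-((t:ℂ)*z)^2/2))
      (F' := fun (z : ℂ) (t : ℝ) => Complex.exp (-((t:ℂ)*z)^2/2) * (-(t:ℂ)^2 * z))
      (x₀ := z₀) (a := 0) (b := 1) (μ := volume)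
      (bound := fun _ => Real.exp (M^2/2) * M)
      (Metric.ball_mem_nhds z₀ one_pos)
      (Eventually.of_forall fun z => ((hcont z).aestronglyMeasurable))
      (((hcont z₀)).intervalIntegrable 0 1)
      ?_ ?_ ?_ ?_
    · exact key.2.differentiableAt
    · exact (Continuous.aestronglyMeasurable (by fun_prop))
    · refine Eventually.of_forall fun t ht z hz => ?_
      have ht' : t ∈ Set.Ioc (0:ℝ) 1 := by simpa [Set.uIoc_of_le (zero_le_one)] using ht
      have htt : |t| ≤ 1 := by rw [abs_of_pos ht'.1]; exact ht'.2
      have hzM : ‖z‖ ≤ M := by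
        have := mem_ball_iff_norm.mp hz
        calc ‖z‖ ≤ ‖z - z₀‖ + ‖z₀‖ := by simpa using norm_add_le (z - z₀) z₀
        _ ≤ M := by rw [hM]; linarith [this.le]
      have htz : ‖(t:ℂ)*z‖ ≤ M := by
        rw [norm_mul, Complex.norm_real, Real.norm_eq_abs]
        calc |t| * ‖z‖ ≤ 1 * M := mul_le_mul htt hzM (norm_nonneg _) zero_le_one
        _ = M := one_mul M
      rw [norm_mul]
      have h1 : ‖Complex.exp (-((t:ℂ)*z)^2/2)‖ ≤ Real.exp (M^2/2) := by
        rw [Complex.norm_exp]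
        apply Real.exp_le_exp.mpr
        calc (-((t:ℂ)*z)^2/2).re ≤ ‖-((t:ℂ)*z)^2/2‖ := Complex.re_le_norm _
        _ = ‖(t:ℂ)*z‖^2 / 2 := by
            rw [norm_div, norm_neg, norm_pow]; simp
        _ ≤ M^2/2 := by nlinarith [norm_nonneg ((t:ℂ)*z)]
      have h2 : ‖-(t:ℂ)^2 * z‖ ≤ M := by
        rw [norm_mul, norm_neg, norm_pow, Complex.norm_real, Real.norm_eq_abs]
        have ht2 : |t|^2 ≤ 1 := by nlinarith [abs_nonneg t, htt]
        calc |t|^2 * ‖z‖ ≤ 1 * M :=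
          mul_le_mul ht2 hzM (norm_nonneg _) zero_le_one
        _ = M := one_mul M
      exact mul_le_mul h1 h2 (norm_nonneg _) (Real.exp_pos _).le
    · exact intervalIntegrable_const
    · refine Eventually.of_forall fun t ht z hz => ?_
      have : HasDerivAt (fun z : ℂ => -((t:ℂ)*z)^2/2) (-(t:ℂ)^2 * z) z := by
        have : HasDerivAt (fun z : ℂ => (t:ℂ)*z) (t:ℂ) z := by
          simpa using (hasDerivAt_id z).const_mul (t:ℂ)
        have h2 := ((this.pow 2).neg).div_const 2
        refine h2.congr_deriv ?_
        ring
      simpa [mul_comm] using this.cexp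
  exact fun z => (differentiable_id.mul hH) z


lemma gauss_integrable : Integrable (fun t : ℝ => rexp (-t^2/2)) := by
  have h := integrable_exp_neg_mul_sq (b := (1/2 : ℝ)) (by norm_num)
  have e : ∀ t : ℝ, -(1/2 : ℝ) * t^2 = -t^2/2 := fun t => by ring
  simp_rw [e] at h
  exact h

lemma gauss_int : ∫ x : ℝ, rexp (-x^2/2) = Real.sqrt (2*π) := by
  have h := integral_gaussian (1/2 : ℝ)
  have e : ∀ t : ℝ, -(1/2 : ℝ) * t^2 = -t^2/2 := fun t => by ring
  simp_rw [e] at h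
  rw [h]
  rw [show π / (1/2 : ℝ) = 2*π by ring]

lemma gauss_Iic : ∫ x in Iic (0:ℝ), rexp (-x^2/2) = Real.sqrt (2*π) / 2 := by
  have hrefl : ∫ x in Ioi (0:ℝ), rexp (-x^2/2) = ∫ x in Iic (0:ℝ), rexp (-x^2/2) := by
    have h := integral_comp_neg_Ioi (c := (0:ℝ)) (f := fun x => rexp (-x^2/2))
    simp only [neg_zero, neg_sq] at h
    exact h
  have hsplit := intervalIntegral.integral_Iic_add_Ioi (μ := volume) (b := (0:ℝ))
    (f := fun x : ℝ => rexp (-x^2/2)) gauss_integrable.integrableOn gauss_integrable.integrableOn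
  rw [gauss_int] at hsplit
  linarith [hrefl, hsplit]

lemma sqrt_two_pi_pos : 0 < Real.sqrt (2*π) := Real.sqrt_pos.mpr (by positivity)

lemma cdf_eq (x : ℝ) :
    stdNormalCDF x = 1/2 + (∫ t in (0:ℝ)..x, rexp (-t^2/2)) / Real.sqrt (2*π) := by
  have h1 : stdNormalCDF x = (∫ t in Iic x, rexp (-t^2/2)) / Real.sqrt (2*π) := by
    rw [stdNormalCDF, MeasureTheory.integral_Iic_eq_integral_Iio, MeasureTheory.integral_div]
  have h2 : ∫ t in (0:ℝ)..x, rexp (-t^2/2)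
      = (∫ t in Iic x, rexp (-t^2/2)) - ∫ t in Iic (0:ℝ), rexp (-t^2/2) :=
    (integral_Iic_sub_Iic gauss_integrable.integrableOn gauss_integrable.integrableOn).symm
  rw [h1, h2, gauss_Iic]
  field_simp
  ring

lemma cP_real (y : ℝ) : cP (y : ℂ) = ((∫ t in (0:ℝ)..y, rexp (-t^2/2) : ℝ) : ℂ) := by
  have h1 : ∀ t : ℝ, Complex.exp (-((t:ℂ)*(y:ℂ))^2/2) = ((rexp (-(t*y)^2/2) : ℝ) : ℂ) := by
    intro t
    rw [show (-((t:ℂ)*(y:ℂ))^2/2 : ℂ) = ((-(t*y)^2/2 : ℝ) : ℂ) by push_cast; ring,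
      ← Complex.ofReal_exp]
  rw [cP]
  simp_rw [h1]
  rw [intervalIntegral.integral_ofReal]
  have h2 : y • ∫ t in (0:ℝ)..1, rexp (-(t*y)^2/2) = ∫ u in (0:ℝ)*y..(1:ℝ)*y, rexp (-u^2/2) :=
    intervalIntegral.smul_integral_comp_mul_right (fun u => rexp (-u^2/2)) y
  simp only [zero_mul, one_mul, smul_eq_mul] at h2
  rw [← Complex.ofReal_mul, h2]

lemma analyticAt_P (x : ℝ) :
    AnalyticAt ℝ (fun y : ℝ => ∫ t in (0:ℝ)..y, rexp (-t^2/2)) x := by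
  have h2 : AnalyticAt ℝ (cP ∘ (fun y : ℝ => Complex.ofRealCLM y)) x :=
    AnalyticAt.comp ((diff_cP.analyticAt _).restrictScalars) (Complex.ofRealCLM.analyticAt x)
  have h1 : AnalyticAt ℝ ((fun z : ℂ => Complex.reCLM z) ∘
      (cP ∘ (fun y : ℝ => Complex.ofRealCLM y))) x :=
    (Complex.reCLM.analyticAt _).comp h2
  apply h1.congr
  apply Eventually.of_forall
  intro y
  simp only [Function.comp_apply, Complex.ofRealCLM_apply, Complex.reCLM_apply, cP_real,
    Complex.ofReal_re]

lemma analyticAt_cdf (x : ℝ) : AnalyticAt ℝ stdNormalCDF x := by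
  have : stdNormalCDF = fun y => 1/2 + (∫ t in (0:ℝ)..y, rexp (-t^2/2)) / Real.sqrt (2*π) :=
    funext cdf_eq
  rw [this]
  exact (analyticAt_const).add ((analyticAt_P x).div analyticAt_const sqrt_two_pi_pos.ne')

lemma hasDerivAt_cdf (x : ℝ) :
    HasDerivAt stdNormalCDF (rexp (-x^2/2) / Real.sqrt (2*π)) x := by
  have hc : Continuous (fun t : ℝ => rexp (-t^2/2)) := by fun_prop
  have h1 : HasDerivAt (fun y : ℝ => ∫ t in (0:ℝ)..y, rexp (-t^2/2)) (rexp (-x^2/2)) x :=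
    intervalIntegral.integral_hasDerivAt_right (hc.intervalIntegrable 0 x)
      (hc.stronglyMeasurableAtFilter _ _) hc.continuousAt
  have : stdNormalCDF = fun y => 1/2 + (∫ t in (0:ℝ)..y, rexp (-t^2/2)) / Real.sqrt (2*π) :=
    funext cdf_eq
  rw [this]
  simpa using (h1.div_const (Real.sqrt (2*π))).const_add (1/2 : ℝ)

lemma hasDerivAt_CBS {T S K : ℝ} (hT : 0 < T) (hS : 0 < S) (hK : 0 < K) {σ : ℝ} (hσ : 0 < σ) :
    HasDerivAt (fun s => C_BS T S K s)
      (S * (rexp (-(Real.log (S/K)/(σ*Real.sqrt T) + σ*Real.sqrt T/2)^2/2) / Real.sqrt (2*π))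
        * Real.sqrt T) σ := by
  set rT := Real.sqrt T with hrT
  have hrT0 : 0 < rT := Real.sqrt_pos.mpr hT
  set L := Real.log (S/K) with hL
  have hσrT : σ * rT ≠ 0 := by positivity
  have ha : HasDerivAt (fun s : ℝ => L/(s*rT)) (-L/(σ^2*rT)) σ := by
    have h := (hasDerivAt_const σ L).div ((hasDerivAt_id σ).mul_const rT) hσrT
    refine h.congr_deriv ?_
    rw [id_eq, div_eq_div_iff (by positivity) (by positivity)]
    ring
  have hb : HasDerivAt (fun s : ℝ => s*rT/2) (rT/2) σ := by
    have h := ((hasDerivAt_id σ).mul_const rT).div_const 2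
    simpa using h
  have hd1 : HasDerivAt (fun s : ℝ => L/(s*rT) + s*rT/2) (-L/(σ^2*rT) + rT/2) σ := ha.add hb
  have hd2 : HasDerivAt (fun s : ℝ => L/(s*rT) - s*rT/2) (-L/(σ^2*rT) - rT/2) σ := ha.sub hb
  have hN1 : HasDerivAt (fun s : ℝ => stdNormalCDF (L/(s*rT) + s*rT/2))
      ((rexp (-(L/(σ*rT) + σ*rT/2)^2/2) / Real.sqrt (2*π)) * (-L/(σ^2*rT) + rT/2)) σ :=
    (hasDerivAt_cdf _).comp σ hd1
  have hN2 : HasDerivAt (fun s : ℝ => stdNormalCDF (L/(s*rT) - s*rT/2))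
      ((rexp (-(L/(σ*rT) - σ*rT/2)^2/2) / Real.sqrt (2*π)) * (-L/(σ^2*rT) - rT/2)) σ :=
    (hasDerivAt_cdf _).comp σ hd2
  have h := (hN1.const_mul S).sub (hN2.const_mul K)
  have hphi : rexp (-(L/(σ*rT) - σ*rT/2)^2/2) = rexp (-(L/(σ*rT) + σ*rT/2)^2/2) * (S/K) := by
    rw [show S/K = rexp L from (Real.exp_log (div_pos hS hK)).symm, ← Real.exp_add]
    congr 1
    field_simp
    ring
  refine h.congr_deriv ?_
  rw [hphi]
  field_simp
  ring

lemma vega_pos {T S K : ℝ} (hT : 0 < T) (hS : 0 < S) {σ : ℝ} :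
    0 < S * (rexp (-(Real.log (S/K)/(σ*Real.sqrt T) + σ*Real.sqrt T/2)^2/2) / Real.sqrt (2*π))
        * Real.sqrt T := by
  have h1 := sqrt_two_pi_pos
  have h2 : 0 < Real.sqrt T := Real.sqrt_pos.mpr hT
  positivity

lemma CBS_strictMono {T S K : ℝ} (hT : 0 < T) (hS : 0 < S) (hK : 0 < K) :
    StrictMonoOn (fun σ => C_BS T S K σ) (Ioi 0) := by
  apply strictMonoOn_of_deriv_pos (convex_Ioi 0)
  · exact fun x hx => (hasDerivAt_CBS hT hS hK hx).continuousAt.continuousWithinAt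
  · intro x hx
    rw [interior_Ioi] at hx
    rw [(hasDerivAt_CBS hT hS hK hx).deriv]
    exact vega_pos hT hS

lemma isOpen_D_I : IsOpen D_I := by
  have h0 : Continuous (fun x : Fin 3 → ℝ => x 0) := continuous_apply 0
  have h1 : Continuous (fun x : Fin 3 → ℝ => x 1) := continuous_apply 1
  have h2 : Continuous (fun x : Fin 3 → ℝ => x 2) := continuous_apply 2
  have : D_I = {x : Fin 3 → ℝ | 0 < x 0} ∩ {x | 0 < x 1} ∩
      {x | max (x 0 - x 1) 0 < x 2} ∩ {x | x 2 < x 0} := by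
    ext x; simp [D_I, Set.mem_setOf_eq]; tauto
  rw [this]
  exact (((isOpen_lt continuous_const h0).inter (isOpen_lt continuous_const h1)).inter
    (isOpen_lt ((h0.sub h1).max continuous_const) h2)).inter (isOpen_lt h2 h0)

lemma analyticAt_CBS3 {T : ℝ} (hT : 0 < T) {y : Fin 3 → ℝ}
    (h0 : 0 < y 0) (h1 : 0 < y 1) (h2 : 0 < y 2) :
    AnalyticAt ℝ (fun y : Fin 3 → ℝ => C_BS T (y 0) (y 1) (y 2)) y := by
  have comp' : ∀ {g : ℝ → ℝ} {f : (Fin 3 → ℝ) → ℝ}, AnalyticAt ℝ g (f y) →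
      AnalyticAt ℝ f y → AnalyticAt ℝ (fun z => g (f z)) y := fun hg hf => by
    simpa [Function.comp_def] using hg.comp hf
  have hrT : (0:ℝ) < Real.sqrt T := Real.sqrt_pos.mpr hT
  have p0 : AnalyticAt ℝ (fun y : Fin 3 → ℝ => y 0) y :=
    (ContinuousLinearMap.proj (R := ℝ) (φ := fun _ : Fin 3 => ℝ) 0).analyticAt y
  have p1 : AnalyticAt ℝ (fun y : Fin 3 → ℝ => y 1) y :=
    (ContinuousLinearMap.proj (R := ℝ) (φ := fun _ : Fin 3 => ℝ) 1).analyticAt y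
  have p2 : AnalyticAt ℝ (fun y : Fin 3 → ℝ => y 2) y :=
    (ContinuousLinearMap.proj (R := ℝ) (φ := fun _ : Fin 3 => ℝ) 2).analyticAt y
  have hdiv : AnalyticAt ℝ (fun y : Fin 3 → ℝ => y 0 / y 1) y := p0.div p1 h1.ne'
  have hlog : AnalyticAt ℝ (fun y : Fin 3 → ℝ => Real.log (y 0 / y 1)) y :=
    comp' (analyticAt_rlog (div_pos h0 h1)) hdiv
  have hden : AnalyticAt ℝ (fun y : Fin 3 → ℝ => y 2 * Real.sqrt T) y := p2.mul analyticAt_const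
  have hdenne : y 2 * Real.sqrt T ≠ 0 := by positivity
  have hfrac : AnalyticAt ℝ (fun y : Fin 3 → ℝ => Real.log (y 0 / y 1) / (y 2 * Real.sqrt T)) y :=
    hlog.div hden hdenne
  have hhalf : AnalyticAt ℝ (fun y : Fin 3 → ℝ => y 2 * Real.sqrt T / 2) y :=
    hden.div analyticAt_const two_ne_zero
  have hd1 : AnalyticAt ℝ (fun y : Fin 3 → ℝ =>
      Real.log (y 0 / y 1) / (y 2 * Real.sqrt T) + y 2 * Real.sqrt T / 2) y := hfrac.add hhalf
  have hd2 : AnalyticAt ℝ (fun y : Fin 3 → ℝ =>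
      Real.log (y 0 / y 1) / (y 2 * Real.sqrt T) - y 2 * Real.sqrt T / 2) y := hfrac.sub hhalf
  have hN1 : AnalyticAt ℝ (fun y : Fin 3 → ℝ => stdNormalCDF
      (Real.log (y 0 / y 1) / (y 2 * Real.sqrt T) + y 2 * Real.sqrt T / 2)) y :=
    comp' (analyticAt_cdf _) hd1
  have hN2 : AnalyticAt ℝ (fun y : Fin 3 → ℝ => stdNormalCDF
      (Real.log (y 0 / y 1) / (y 2 * Real.sqrt T) - y 2 * Real.sqrt T / 2)) y :=
    comp' (analyticAt_cdf _) hd2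
  exact (p0.mul hN1).sub (p1.mul hN2)

/-- The implied volatility function is real analytic on `D_I`. -/
theorem implied_vol_analytic (T : ℝ) (hT : 0 < T)
    (I : (Fin 3 → ℝ) → ℝ)
    (hIpos : ∀ x ∈ D_I, 0 < I x)
    (hI : ∀ x ∈ D_I, C_BS T (x 0) (x 1) (I x) = x 2) :
    AnalyticOnNhd ℝ I D_I := by
  intro p hp
  obtain ⟨hp0, hp1, _hp2, _hp3⟩ := hp
  have hpD : p ∈ D_I := ⟨hp0, hp1, _hp2, _hp3⟩
  set σ₀ := I p with hσ₀def
  have hσ₀ : 0 < σ₀ := hIpos p hpD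
  set cfun : (Fin 3 → ℝ) → ℝ := fun y => C_BS T (y 0) (y 1) (y 2) with hcfun
  set Φ : (Fin 3 → ℝ) → (Fin 3 → ℝ) := fun y => ![y 0, y 1, cfun y] with hΦdef
  set q : Fin 3 → ℝ := ![p 0, p 1, σ₀] with hqdef
  have hq0 : q 0 = p 0 := rfl
  have hq1 : q 1 = p 1 := rfl
  have hq2 : q 2 = σ₀ := rfl
  have hcq : AnalyticAt ℝ cfun q := analyticAt_CBS3 hT (hq0 ▸ hp0) (hq1 ▸ hp1) (hq2 ▸ hσ₀)
  -- analyticity of Φ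
  have hΦa : AnalyticAt ℝ Φ q := by
    apply analyticAt_pi_iff.mpr
    intro i
    fin_cases i
    · simpa [hΦdef] using
        (show AnalyticAt ℝ (fun x : Fin 3 → ℝ => x 0) q from (ContinuousLinearMap.proj (R := ℝ) (φ := fun _ : Fin 3 => ℝ) 0).analyticAt q)
    · simpa [hΦdef] using
        (show AnalyticAt ℝ (fun x : Fin 3 → ℝ => x 1) q from (ContinuousLinearMap.proj (R := ℝ) (φ := fun _ : Fin 3 => ℝ) 1).analyticAt q)
    · simpa [hΦdef] using hcq
  -- derivative of Φ
  set D : (Fin 3 → ℝ) →L[ℝ] ℝ := fderiv ℝ cfun q with hDdef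
  set A : (Fin 3 → ℝ) →L[ℝ] (Fin 3 → ℝ) :=
    ContinuousLinearMap.pi ![ContinuousLinearMap.proj 0, ContinuousLinearMap.proj 1, D] with hAdef
  have hdA : HasFDerivAt Φ A q := by
    apply hasFDerivAt_pi''
    intro i
    fin_cases i
    · exact hasFDerivAt_pi'.mp (ContinuousLinearMap.id ℝ (Fin 3 → ℝ)).hasFDerivAt 0 |>.congr_fderiv
        (by ext v; rfl)
    · exact hasFDerivAt_pi'.mp (ContinuousLinearMap.id ℝ (Fin 3 → ℝ)).hasFDerivAt 1 |>.congr_fderiv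
        (by ext v; rfl)
    · exact hcq.differentiableAt.hasFDerivAt.congr_fderiv (by ext v; rfl)
  -- vega identification
  set vega : ℝ := p 0 * (rexp (-(Real.log (p 0/p 1)/(σ₀*Real.sqrt T) + σ₀*Real.sqrt T/2)^2/2)
      / Real.sqrt (2*π)) * Real.sqrt T with hvegadef
  have hvega_pos : 0 < vega := vega_pos hT hp0
  have hDv : D (Pi.single 2 1) = vega := by
    have hpath : HasDerivAt (fun t : ℝ => Function.update q 2 t)
        (Pi.single (2 : Fin 3) (1:ℝ) : Fin 3 → ℝ) σ₀ := by
      have heq : (fun t : ℝ => Function.update q 2 t)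
          = fun t : ℝ => q + (t - q 2) • (Pi.single (2 : Fin 3) (1:ℝ) : Fin 3 → ℝ) := by
        funext t i
        by_cases h : i = 2
        · subst h; simp
        · simp [Function.update_apply, h, Pi.single_apply, Ne.symm h]
      rw [heq]
      simpa using (((hasDerivAt_id σ₀).sub_const (q 2)).smul_const
        (Pi.single (2 : Fin 3) (1:ℝ) : Fin 3 → ℝ)).const_add q
    have hupd : Function.update q 2 σ₀ = q := by rw [← hq2]; exact Function.update_eq_self _ _
    have hf' : HasFDerivAt cfun D (Function.update q 2 σ₀) := by
      rw [hupd]; exact hcq.differentiableAt.hasFDerivAt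
    have hcomp : HasDerivAt (cfun ∘ fun t : ℝ => Function.update q 2 t)
        (D (Pi.single (2 : Fin 3) (1:ℝ) : Fin 3 → ℝ)) σ₀ :=
      hf'.comp_hasDerivAt σ₀ hpath
    have hcomp' : HasDerivAt (fun t : ℝ => C_BS T (p 0) (p 1) t) (D (Pi.single 2 1)) σ₀ := by
      have : (cfun ∘ fun t : ℝ => Function.update q 2 t)
          = fun t : ℝ => C_BS T (p 0) (p 1) t := by
        funext t
        show C_BS T (Function.update q 2 t 0) (Function.update q 2 t 1)
          (Function.update q 2 t 2) = C_BS T (p 0) (p 1) t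
        rw [Function.update_of_ne (by decide : (0:Fin 3) ≠ 2),
          Function.update_of_ne (by decide : (1:Fin 3) ≠ 2), Function.update_self, hq0, hq1]
      rwa [this] at hcomp
    exact hcomp'.unique (hasDerivAt_CBS hT hp0 hp1 hσ₀)
  -- A is bijective
  have hAinj : Function.Injective A := by
    intro v w hvw
    have hsub : A (v - w) = 0 := by rw [map_sub, hvw, sub_self]
    set u := v - w with hu
    have h0 : u 0 = 0 := congrFun hsub 0
    have h1 : u 1 = 0 := congrFun hsub 1
    have h2 : D u = 0 := congrFun hsub 2
    have hform : u = u 2 • (Pi.single (2 : Fin 3) (1:ℝ) : Fin 3 → ℝ) := by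
      funext i
      fin_cases i
      · simpa using h0
      · simpa using h1
      · simp
    rw [hform, ContinuousLinearMap.map_smul, hDv, smul_eq_mul] at h2
    have hu2 : u 2 = 0 := by
      rcases mul_eq_zero.mp h2 with h | h
      · exact h
      · exact absurd h hvega_pos.ne'
    have : u = 0 := by rw [hform, hu2, zero_smul]
    exact sub_eq_zero.mp this
  have hAbij : Function.Bijective A :=
    ⟨hAinj, (LinearMap.injective_iff_surjective (f := A.toLinearMap)).mp hAinj⟩
  set eA : (Fin 3 → ℝ) ≃L[ℝ] (Fin 3 → ℝ) :=
    (LinearEquiv.ofBijective A.toLinearMap hAbij).toContinuousLinearEquiv with heAdef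
  have heA : (eA : (Fin 3 → ℝ) →L[ℝ] (Fin 3 → ℝ)) = A := by ext v; rfl
  -- inverse function theorem setup
  have hfd : fderiv ℝ Φ q = A := hdA.fderiv
  have hstrict : HasStrictFDerivAt Φ (eA : (Fin 3 → ℝ) →L[ℝ] (Fin 3 → ℝ)) q := by
    have h := hΦa.hasStrictFDerivAt
    rwa [hfd, ← heA] at h
  set f := hstrict.toOpenPartialHomeomorph Φ with hfdef
  have hqs : q ∈ f.source := hstrict.mem_toOpenPartialHomeomorph_source
  have hcoe : ⇑f = Φ := hstrict.toOpenPartialHomeomorph_coe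
  have hΦq : Φ q = p := by
    funext i
    fin_cases i
    · rfl
    · rfl
    · show cfun q = p 2
      have : cfun q = C_BS T (p 0) (p 1) σ₀ := rfl
      rw [this, hσ₀def]
      exact hI p hpD
  have hfq : f q = p := by rw [hcoe, hΦq]
  have hpt : p ∈ f.target := hfq ▸ f.map_source hqs
  have hsymp : f.symm p = q := by rw [← hfq]; exact f.left_inv hqs
  have hsym : AnalyticAt ℝ f.symm p := by
    have h := f.analyticAt_symm' (i := eA) hqs (by rwa [hcoe]) (by rw [hcoe, hfd, heA])
    rwa [hfq] at h
  have hJ : AnalyticAt ℝ (fun y => f.symm y 2) p := by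
    simpa [Function.comp_def] using
      ((ContinuousLinearMap.proj (R := ℝ) (φ := fun _ : Fin 3 => ℝ) 2).analyticAt _).comp hsym
  -- eventual equality
  have hJp : f.symm p 2 = σ₀ := by rw [hsymp]; exact hq2
  have ev3 : ∀ᶠ y in 𝓝 p, 0 < f.symm y 2 := by
    have hc : ContinuousAt (fun y => f.symm y 2) p := hJ.continuousAt
    have := hc.preimage_mem_nhds (Ioi_mem_nhds (by rw [hJp]; exact hσ₀))
    filter_upwards [this] with y hy using hy
  have heq : (fun y => f.symm y 2) =ᶠ[𝓝 p] I := by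
    filter_upwards [isOpen_D_I.mem_nhds hpD, f.open_target.mem_nhds hpt, ev3] with y hy1 hy2 hy3
    have hr : Φ (f.symm y) = y := by rw [← hcoe]; exact f.right_inv hy2
    have hz0 : f.symm y 0 = y 0 := congrFun hr 0
    have hz1 : f.symm y 1 = y 1 := congrFun hr 1
    have hz2 : cfun (f.symm y) = y 2 := congrFun hr 2
    have hCz : C_BS T (y 0) (y 1) (f.symm y 2) = y 2 := by
      rw [← hz0, ← hz1]; exact hz2
    have hCI : C_BS T (y 0) (y 1) (I y) = y 2 := hI y hy1
    exact (CBS_strictMono hT hy1.1 hy1.2.1).injOn hy3 (hIpos y hy1) (by rw [hCz, hCI])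
  exact hJ.congr heq
end

section
/- The Roper–Rutkowski representation of the Black–Scholes price holds: for all S > 0, K > 0 and σ > 0, C_BS(S, K, σ) = max(S − K, 0) + S · ∫_0^{σ√T} φ( log(S/K)/v + v/2 ) dv. -/
open Real Set Filter

/-- Standard normal density. -/
noncomputable def stdNormalPDF (x : ℝ) : ℝ :=
  Real.exp (-x ^ 2 / 2) / Real.sqrt (2 * Real.pi)

section Helpers
open MeasureTheory Topology

lemma pdf_cont : Continuous stdNormalPDF := by
  unfold stdNormalPDF; fun_prop

lemma pdf_integrable : Integrable stdNormalPDF := by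
  have h := (integrable_exp_neg_mul_sq (by norm_num : (0:ℝ) < 1/2)).div_const
    (Real.sqrt (2 * Real.pi))
  have : (fun x : ℝ => Real.exp (-(1/2) * x ^ 2) / Real.sqrt (2 * Real.pi)) = stdNormalPDF := by
    funext x; unfold stdNormalPDF; ring_nf
  rwa [this] at h

lemma pdf_total : ∫ t, stdNormalPDF t = 1 := by
  have h := integral_gaussian (1/2)
  have h2 : ∫ t : ℝ, Real.exp (-(1/2) * t ^ 2) = Real.sqrt (2 * Real.pi) := by
    rw [h]; congr 1; ring
  have h3 : ∫ t, stdNormalPDF t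
      = (∫ t : ℝ, Real.exp (-(1/2) * t ^ 2)) / Real.sqrt (2 * Real.pi) := by
    rw [← integral_div]; congr 1; funext t; unfold stdNormalPDF; ring_nf
  rw [h3, h2, div_self]
  positivity

lemma cdf_eq_s7 (x : ℝ) :
    stdNormalCDF x = stdNormalCDF 0 + ∫ t in (0:ℝ)..x, stdNormalPDF t := by
  have h0 : ∀ y : ℝ, stdNormalCDF y = ∫ t in Iic y, stdNormalPDF t := by
    intro y; rw [integral_Iic_eq_integral_Iio]; rfl
  rw [h0, h0, ← intervalIntegral.integral_Iic_sub_Iic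
    pdf_integrable.integrableOn pdf_integrable.integrableOn]
  ring

lemma cdf_hasDeriv (x : ℝ) : HasDerivAt stdNormalCDF (stdNormalPDF x) x := by
  have : stdNormalCDF = fun y => stdNormalCDF 0 + ∫ t in (0:ℝ)..y, stdNormalPDF t := by
    funext y; exact cdf_eq_s7 y
  rw [this]
  exact (intervalIntegral.integral_hasDerivAt_right
    pdf_integrable.intervalIntegrable
    (pdf_cont.stronglyMeasurableAtFilter _ _) pdf_cont.continuousAt).const_add _

lemma cdf_atTop : Tendsto stdNormalCDF atTop (𝓝 1) := by
  have h := tendsto_setIntegral_of_monotone (μ := volume) (f := stdNormalPDF)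
    (s := fun i : ℝ => Iio i) (fun i => measurableSet_Iio)
    (fun i j hij => Iio_subset_Iio hij)
    (by rw [Set.iUnion_Iio]; exact integrableOn_univ.mpr pdf_integrable)
  rw [Set.iUnion_Iio, setIntegral_univ, pdf_total] at h
  exact h

lemma cdf_atBot : Tendsto stdNormalCDF atBot (𝓝 0) := by
  have h := tendsto_setIntegral_of_antitone (μ := volume) (f := stdNormalPDF)
    (s := fun i : ℝ => Iio (-i)) (fun i => measurableSet_Iio)
    (fun i j hij => Iio_subset_Iio (by linarith))
    ⟨0, pdf_integrable.integrableOn⟩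
  have hempty : ⋂ i : ℝ, Iio (-i) = (∅ : Set ℝ) := by
    ext x; simp only [mem_iInter, mem_Iio, mem_empty_iff_false, iff_false, not_forall, not_lt]
    exact ⟨-x, by linarith⟩
  rw [hempty] at h
  simp only [Measure.restrict_empty, integral_zero_measure] at h
  have : stdNormalCDF = (fun i : ℝ => ∫ t in Iio (-i), stdNormalPDF t) ∘ Neg.neg := by
    funext x; simp only [Function.comp_apply, neg_neg]; rfl
  rw [this]
  exact h.comp tendsto_neg_atBot_atTop


lemma lemA (S K : ℝ) (hS : 0 < S) (hK : 0 < K) (v : ℝ) (hv : 0 < v) :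
    HasDerivAt (fun w => S * stdNormalCDF (Real.log (S/K) / w + w / 2)
        - K * stdNormalCDF (Real.log (S/K) / w - w / 2))
      (S * stdNormalPDF (Real.log (S/K) / v + v / 2)) v := by
  set L := Real.log (S/K) with hLdef
  have hd1 : HasDerivAt (fun w : ℝ => L / w + w / 2) (-L/v^2 + 1/2) v := by
    have h1 : HasDerivAt (fun w : ℝ => L / w) (L * -(v^2)⁻¹) v := by
      simpa only [div_eq_mul_inv] using (hasDerivAt_inv hv.ne').const_mul L
    have h3 : HasDerivAt (fun w : ℝ => w / 2) ((1:ℝ)/2) v := by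
      simpa using (hasDerivAt_id v).div_const 2
    have := h1.add h3
    exact this.congr_deriv (by ring)
  have hd2 : HasDerivAt (fun w : ℝ => L / w - w / 2) (-L/v^2 - 1/2) v := by
    have h1 : HasDerivAt (fun w : ℝ => L / w) (L * -(v^2)⁻¹) v := by
      simpa only [div_eq_mul_inv] using (hasDerivAt_inv hv.ne').const_mul L
    have h3 : HasDerivAt (fun w : ℝ => w / 2) ((1:ℝ)/2) v := by
      simpa using (hasDerivAt_id v).div_const 2
    have := h1.sub h3
    exact this.congr_deriv (by ring)
  have hc1 : HasDerivAt (fun w => stdNormalCDF (L / w + w / 2))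
      (stdNormalPDF (L/v + v/2) * (-L/v^2 + 1/2)) v :=
    (cdf_hasDeriv _).comp v hd1
  have hc2 : HasDerivAt (fun w => stdNormalCDF (L / w - w / 2))
      (stdNormalPDF (L/v - v/2) * (-L/v^2 - 1/2)) v :=
    (cdf_hasDeriv _).comp v hd2
  have hid : K * stdNormalPDF (L / v - v / 2) = S * stdNormalPDF (L / v + v / 2) := by
    have hexp : Real.exp L = S / K := Real.exp_log (div_pos hS hK)
    unfold stdNormalPDF
    have e1 : -(L/v - v/2)^2/2 = L + -(L/v + v/2)^2/2 := by field_simp; ring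
    rw [e1, Real.exp_add, hexp]
    field_simp
  have := (hc1.const_mul S).sub (hc2.const_mul K)
  refine this.congr_deriv ?_
  symm
  linear_combination (-L/v^2 - 1/2) * hid



lemma lemC (S K : ℝ) (hS : 0 < S) (hK : 0 < K) :
    Tendsto (fun v => S * stdNormalCDF (Real.log (S/K) / v + v / 2)
        - K * stdNormalCDF (Real.log (S/K) / v - v / 2)) (𝓝[>] (0:ℝ))
      (𝓝 (max (S - K) 0)) := by
  set L := Real.log (S/K) with hLdef
  have hhalf : Tendsto (fun v : ℝ => v / 2) (𝓝[>] (0:ℝ)) (𝓝 0) := by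
    have := ((continuous_id.div_const 2).tendsto 0).mono_left
      (nhdsWithin_le_nhds (s := Ioi (0:ℝ)))
    simpa using this
  rcases lt_trichotomy L 0 with hL | hL | hL
  · -- S < K
    have hSK : S < K := by
      have h1 : S / K < 1 := (Real.log_neg_iff (div_pos hS hK)).mp hL
      calc S = S / K * K := by field_simp
      _ < 1 * K := by exact mul_lt_mul_of_pos_right h1 hK
      _ = K := one_mul K
    have hLv : Tendsto (fun v : ℝ => L / v) (𝓝[>] (0:ℝ)) atBot := by
      have h1 : Tendsto (fun v : ℝ => (-L) * v⁻¹) (𝓝[>] (0:ℝ)) atTop :=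
        tendsto_inv_nhdsGT_zero.const_mul_atTop (by linarith)
      have h2 := tendsto_neg_atTop_atBot.comp h1
      refine h2.congr fun v => ?_
      simp [Function.comp, div_eq_mul_inv]
    have hd1 : Tendsto (fun v : ℝ => L / v + v / 2) (𝓝[>] (0:ℝ)) atBot :=
      hLv.atBot_add hhalf
    have hd2 : Tendsto (fun v : ℝ => L / v - v / 2) (𝓝[>] (0:ℝ)) atBot := by
      simpa [sub_eq_add_neg] using hLv.atBot_add hhalf.neg
    have h1 := cdf_atBot.comp hd1
    have h2 := cdf_atBot.comp hd2
    have : Tendsto (fun v => S * stdNormalCDF (L / v + v / 2)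
        - K * stdNormalCDF (L / v - v / 2)) (𝓝[>] (0:ℝ)) (𝓝 (S * 0 - K * 0)) :=
      ((h1.const_mul S).sub (h2.const_mul K))
    simpa [max_eq_right (by linarith : S - K ≤ 0)] using this
  · -- S = K
    have hSK : S = K := by
      have h1 : S / K = 1 := Real.eq_one_of_pos_of_log_eq_zero (div_pos hS hK) hL
      field_simp at h1
      exact h1
    have hrw : (fun v => S * stdNormalCDF (L / v + v / 2)
        - K * stdNormalCDF (L / v - v / 2))
        = fun v => S * stdNormalCDF (v / 2) - K * stdNormalCDF (-(v / 2)) := by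
      funext v
      rw [hL]
      simp [zero_div, zero_sub, zero_add]
    rw [hrw]
    have hcdf_cont : Continuous stdNormalCDF := by
      have : Differentiable ℝ stdNormalCDF := fun x => (cdf_hasDeriv x).differentiableAt
      exact this.continuous
    have hcont : Tendsto (fun v : ℝ => S * stdNormalCDF (v / 2)
        - K * stdNormalCDF (-(v / 2))) (𝓝[>] (0:ℝ))
        (𝓝 (S * stdNormalCDF (0/2) - K * stdNormalCDF (-(0/2)))) := by
      apply Tendsto.mono_left _ (nhdsWithin_le_nhds (s := Ioi (0:ℝ)))
      exact Continuous.tendsto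
        ((continuous_const.mul (hcdf_cont.comp (continuous_id.div_const 2))).sub
          (continuous_const.mul (hcdf_cont.comp ((continuous_id.div_const 2).neg)))) 0
    norm_num at hcont
    rw [hSK] at hcont ⊢
    simpa [sub_self] using hcont
  · -- S > K
    have hSK : K < S := by
      have h1 : 1 < S / K := by
        have h2 := Real.exp_lt_exp.mpr hL
        rwa [Real.exp_zero, Real.exp_log (div_pos hS hK)] at h2
      calc K = 1 * K := (one_mul K).symm
      _ < S / K * K := by exact mul_lt_mul_of_pos_right h1 hK
      _ = S := by field_simp
    have hLv : Tendsto (fun v : ℝ => L / v) (𝓝[>] (0:ℝ)) atTop := by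
      have h1 : Tendsto (fun v : ℝ => L * v⁻¹) (𝓝[>] (0:ℝ)) atTop :=
        tendsto_inv_nhdsGT_zero.const_mul_atTop hL
      refine h1.congr fun v => ?_
      simp [div_eq_mul_inv]
    have hd1 : Tendsto (fun v : ℝ => L / v + v / 2) (𝓝[>] (0:ℝ)) atTop :=
      hLv.atTop_add hhalf
    have hd2 : Tendsto (fun v : ℝ => L / v - v / 2) (𝓝[>] (0:ℝ)) atTop := by
      simpa [sub_eq_add_neg] using hLv.atTop_add hhalf.neg
    have h1 := cdf_atTop.comp hd1
    have h2 := cdf_atTop.comp hd2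
    have : Tendsto (fun v => S * stdNormalCDF (L / v + v / 2)
        - K * stdNormalCDF (L / v - v / 2)) (𝓝[>] (0:ℝ)) (𝓝 (S * 1 - K * 1)) :=
      ((h1.const_mul S).sub (h2.const_mul K))
    simpa [max_eq_left (by linarith : (0:ℝ) ≤ S - K)] using this


end Helpers

open MeasureTheory Topology in
/-- Roper–Rutkowski representation of the Black–Scholes price. -/
theorem C_BS_roper_rutkowski (T : ℝ) (hT : 0 < T) (S K σ : ℝ)
    (hS : 0 < S) (hK : 0 < K) (hσ : 0 < σ) :
    C_BS T S K σ = max (S - K) 0 +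
      S * ∫ v in (0 : ℝ)..(σ * Real.sqrt T),
        stdNormalPDF (Real.log (S / K) / v + v / 2) := by
  set a := σ * Real.sqrt T with ha_def
  have ha : 0 < a := mul_pos hσ (Real.sqrt_pos.mpr hT)
  set L := Real.log (S / K) with hLdef
  set g : ℝ → ℝ := fun w => S * stdNormalCDF (L / w + w / 2)
    - K * stdNormalCDF (L / w - w / 2) with hgdef
  set h : ℝ → ℝ := fun w => S * stdNormalPDF (L / w + w / 2) with hhdef
  have hderiv : ∀ v, 0 < v → HasDerivAt g (h v) v := fun v hv => lemA S K hS hK v hv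
  have hbound : ∀ x, ‖h x‖ ≤ S * (1 / Real.sqrt (2 * Real.pi)) := by
    intro x
    have hpdf_nonneg : 0 ≤ stdNormalPDF (L / x + x / 2) := by
      unfold stdNormalPDF; positivity
    have hpdf_le : stdNormalPDF (L / x + x / 2) ≤ 1 / Real.sqrt (2 * Real.pi) := by
      unfold stdNormalPDF
      have he : Real.exp (-(L / x + x / 2) ^ 2 / 2) ≤ 1 := by
        rw [Real.exp_le_one_iff]
        nlinarith [sq_nonneg (L / x + x / 2)]
      gcongr
    have : ‖h x‖ = S * stdNormalPDF (L / x + x / 2) := by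
      rw [hhdef]
      simp only []
      rw [Real.norm_eq_abs, abs_of_nonneg (mul_nonneg hS.le hpdf_nonneg)]
    rw [this]
    exact mul_le_mul_of_nonneg_left hpdf_le hS.le
  have hmeas : Measurable h := by
    apply Measurable.const_mul
    exact pdf_cont.measurable.comp
      ((measurable_const.div measurable_id).add (measurable_id.div_const 2))
  have hInt : IntegrableOn h (Ioc 0 a) := by
    refine Integrable.mono' (g := fun _ => S * (1 / Real.sqrt (2 * Real.pi)))
      (integrableOn_const (hs := measure_Ioc_lt_top.ne))
      hmeas.aestronglyMeasurable (ae_of_all _ hbound)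
  have hIε : ∀ ε ∈ Ioc (0:ℝ) a, IntervalIntegrable h volume 0 ε := fun ε hε =>
    (intervalIntegrable_iff_integrableOn_Ioc_of_le hε.1.le).mpr
      (hInt.mono_set (Ioc_subset_Ioc_right hε.2))
  have hIεa : ∀ ε ∈ Ioc (0:ℝ) a, IntervalIntegrable h volume ε a := fun ε hε =>
    (intervalIntegrable_iff_integrableOn_Ioc_of_le hε.2).mpr
      (hInt.mono_set (Ioc_subset_Ioc_left hε.1.le))
  have hFTC : ∀ ε ∈ Ioo (0:ℝ) a, ∫ v in ε..a, h v = g a - g ε := by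
    intro ε hε
    apply intervalIntegral.integral_eq_sub_of_hasDerivAt
    · intro x hx
      rw [uIcc_of_le hε.2.le] at hx
      exact hderiv x (lt_of_lt_of_le hε.1 hx.1)
    · exact hIεa ε ⟨hε.1, hε.2.le⟩
  have hsmall : Tendsto (fun ε => ∫ v in (0:ℝ)..ε, h v) (𝓝[>] 0) (𝓝 0) := by
    apply squeeze_zero_norm'
      (a := fun ε => (S * (1 / Real.sqrt (2 * Real.pi))) * |ε - 0|)
    · filter_upwards with ε
      exact intervalIntegral.norm_integral_le_of_norm_le_const (fun x _ => hbound x)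
    · have : Tendsto (fun ε : ℝ => (S * (1 / Real.sqrt (2 * Real.pi))) * |ε - 0|)
          (𝓝 0) (𝓝 ((S * (1 / Real.sqrt (2 * Real.pi))) * |(0:ℝ) - 0|)) := by
        apply Continuous.tendsto
        fun_prop
      simp only [sub_zero, abs_zero, mul_zero] at this
      simpa [sub_zero] using this.mono_left (nhdsWithin_le_nhds (s := Ioi (0:ℝ)))
  have hEa : Tendsto (fun ε => ∫ v in ε..a, h v) (𝓝[>] (0:ℝ))
      (𝓝 (∫ v in (0:ℝ)..a, h v)) := by
    have heq : ∀ᶠ ε in 𝓝[>] (0:ℝ),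
        (∫ v in (0:ℝ)..a, h v) - (∫ v in (0:ℝ)..ε, h v) = ∫ v in ε..a, h v := by
      filter_upwards [Ioo_mem_nhdsGT_of_mem (Set.left_mem_Ico.mpr ha)] with ε hε
      rw [← intervalIntegral.integral_add_adjacent_intervals
        (hIε ε ⟨hε.1, hε.2.le⟩) (hIεa ε ⟨hε.1, hε.2.le⟩)]
      ring
    exact Tendsto.congr' heq (by simpa using tendsto_const_nhds.sub hsmall)
  have hglim : Tendsto g (𝓝[>] (0:ℝ)) (𝓝 (max (S - K) 0)) := lemC S K hS hK
  have hG : Tendsto (fun ε => g a - g ε) (𝓝[>] (0:ℝ)) (𝓝 (g a - max (S - K) 0)) :=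
    tendsto_const_nhds.sub hglim
  have hG' : Tendsto (fun ε => ∫ v in ε..a, h v) (𝓝[>] (0:ℝ))
      (𝓝 (g a - max (S - K) 0)) := by
    refine hG.congr' ?_
    filter_upwards [Ioo_mem_nhdsGT_of_mem (Set.left_mem_Ico.mpr ha)] with ε hε
    exact (hFTC ε hε).symm
  have key : (∫ v in (0:ℝ)..a, h v) = g a - max (S - K) 0 :=
    tendsto_nhds_unique hEa hG'
  have hrwint : (∫ v in (0:ℝ)..a, h v)
      = S * ∫ v in (0:ℝ)..a, stdNormalPDF (L / v + v / 2) := by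
    rw [hhdef]
    exact intervalIntegral.integral_const_mul _ _
  have hga : g a = C_BS T S K σ := by
    rw [hgdef, C_BS]
  rw [← hga]
  rw [hrwint] at key
  linarith
end
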